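/- Let (G = (V₁, V₂, E), Σ, π) be a projection game and let (B, (C_x)_{x∈Σ}) be a family of subsets of a finite universe B indexed by Σ. If there is a labeling δ : V₁ ∪ V₂ → Σ that satisfies every edge of G (that is, π_e(δ(u)) = δ(v) for every edge e = (u,v) ∈ E), then the associated Set Cover instance has a set cover of size |V₁| + |V₂|: the collection {S_{w,δ(w)} : w ∈ V₁ ∪ V₂} covers the universe E × B. -/
import Mathlib


/-- The sets of the Set Cover instance associated to a projection game
`(G = (V₁, V₂, E), A, π)` and a family `(C_x)_{x ∈ A}` of subsets of `B`:
`S_{u,y} = ⋃_{e∋u} {e} × (B ∖ C_{π_e(y)})` for `u ∈ V₁`, and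
`S_{v,x} = ⋃_{e∋v} {e} × C_x` for `v ∈ V₂`. -/
def projSet {V₁ V₂ A B : Type} (E : Set (V₁ × V₂)) (π : V₁ × V₂ → A → A)
    (C : A → Set B) : (V₁ ⊕ V₂) × A → Set ((V₁ × V₂) × B)
  | (Sum.inl u, y) => {p | p.1 ∈ E ∧ p.1.1 = u ∧ p.2 ∉ C (π p.1 y)}
  | (Sum.inr v, x) => {p | p.1 ∈ E ∧ p.1.2 = v ∧ p.2 ∈ C x}

open scoped Classical in
/-- Completeness: if a labeling `δ` satisfies every edge of the projection game,
then the collection `{S_{w,δ(w)} : w ∈ V₁ ∪ V₂}` covers the universe `E × B`,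
and it consists of at most `|V₁| + |V₂|` sets. -/
theorem stmt_2 {V₁ V₂ A B : Type} [Fintype V₁] [Fintype V₂] [Fintype A] [Fintype B]
    (E : Set (V₁ × V₂)) (π : V₁ × V₂ → A → A) (C : A → Set B)
    (δ₁ : V₁ → A) (δ₂ : V₂ → A)
    (hsat : ∀ e ∈ E, π e (δ₁ e.1) = δ₂ e.2) :
    (E ×ˢ (Set.univ : Set B) ⊆
      ⋃ w : V₁ ⊕ V₂, projSet E π C (w, Sum.elim δ₁ δ₂ w)) ∧
    (Finset.univ.image
        (fun w : V₁ ⊕ V₂ => projSet E π C (w, Sum.elim δ₁ δ₂ w))).card ≤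
      Fintype.card V₁ + Fintype.card V₂ := by
  constructor
  · rintro ⟨e, b⟩ ⟨he, -⟩
    by_cases hb : b ∈ C (δ₂ e.2)
    · exact Set.mem_iUnion.2 ⟨Sum.inr e.2, he, rfl, hb⟩
    · refine Set.mem_iUnion.2 ⟨Sum.inl e.1, he, rfl, ?_⟩
      simpa [hsat e he] using hb
  · calc (Finset.univ.image
        (fun w : V₁ ⊕ V₂ => projSet E π C (w, Sum.elim δ₁ δ₂ w))).card
        ≤ Finset.univ.card := Finset.card_image_le
      _ = Fintype.card V₁ + Fintype.card V₂ := by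
          simp [Fintype.card_sum]
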